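/- For formal power series in z (or for |z| small enough that both sides converge), one has the identity (1-z)·₂φ₁(a, b; aq/b; q, zq/b) = ₄φ₃(a^{1/2}q^{1/2}, -a^{1/2}q^{1/2}, aq^{-1}, bq^{-1}; a^{1/2}q^{-1/2}, -a^{1/2}q^{-1/2}, aq/b; q, zq/b), i.e. the coefficient of z^n on the left equals the coefficient of z^n on the right for every n ≥ 0. -/

import Mathlib

/-- The q-shifted factorial `(a;q)_n = ∏_{k=0}^{n-1} (1 - a q^k)`. -/
def qp (q a : ℂ) (n : ℕ) : ℂ := ∏ k ∈ Finset.range n, (1 - a * q ^ k)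

lemma qp_succ (q a : ℂ) (n : ℕ) : qp q a (n + 1) = qp q a n * (1 - a * q ^ n) :=
  Finset.prod_range_succ _ _

lemma qp_shift (q a : ℂ) (hq : q ≠ 0) (n : ℕ) :
    qp q (a * q⁻¹) (n + 1) = (1 - a * q⁻¹) * qp q a n := by
  rw [qp, Finset.prod_range_succ']
  simp only [pow_zero, mul_one]
  rw [mul_comm]
  congr 1
  apply Finset.prod_congr rfl
  intro k _
  rw [pow_succ]
  field_simp

lemma qp_mul_neg (q c : ℂ) (n : ℕ) :
    qp q c n * qp q (-c) n = ∏ k ∈ Finset.range n, (1 - c ^ 2 * (q ^ k) ^ 2) := by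
  rw [qp, qp, ← Finset.prod_mul_distrib]
  apply Finset.prod_congr rfl
  intro k _
  ring

lemma tele (q a : ℂ) (hq : q ≠ 0) (n : ℕ) :
    (1 - a * q⁻¹) * ∏ k ∈ Finset.range n, (1 - a * q * (q ^ k) ^ 2)
      = (1 - a * q⁻¹ * (q ^ n) ^ 2) * ∏ k ∈ Finset.range n, (1 - a * q⁻¹ * (q ^ k) ^ 2) := by
  have h : ∀ k, 1 - a * q * (q ^ k) ^ 2 = 1 - a * q⁻¹ * (q ^ (k + 1)) ^ 2 := by
    intro k
    rw [pow_succ]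
    field_simp
    ring
  have e1 := Finset.prod_range_succ' (fun k => 1 - a * q⁻¹ * (q ^ k) ^ 2) n
  have e2 := Finset.prod_range_succ (fun k => 1 - a * q⁻¹ * (q ^ k) ^ 2) n
  rw [show (∏ k ∈ Finset.range n, (1 - a * q * (q ^ k) ^ 2))
      = ∏ k ∈ Finset.range n, (1 - a * q⁻¹ * (q ^ (k + 1)) ^ 2) from Finset.prod_congr rfl (fun k _ => h k)]
  linear_combination e2 - e1

lemma frac_reduce (A B C Q P G s w x1 x2 u v c1 c2 : ℂ)
    (hC : C ≠ 0) (hQ : Q ≠ 0) (hu : u ≠ 0) (hv : v ≠ 0) (hP : P ≠ 0)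
    (hkey : (x1 * x2 * w - u * v) * P = G * (c1 * c2 * w)) :
    (A * x1 * (B * x2) / (C * u * (Q * v))) * (s * w) - A * B / (C * Q) * s
      = G * (c1 * A) * (c2 * B) / (P * (C * u) * (Q * v)) * (s * w) := by
  field_simp
  linear_combination (A * B * s) * hkey

set_option maxHeartbeats 1600000 in
/-- Coefficientwise identity
`(1-z)·₂φ₁(a, b; aq/b; q, zq/b) = ₄φ₃(√a·√q, -√a·√q, a/q, b/q; √a/√q, -√a/√q, aq/b; q, zq/b)`. -/
theorem stmt0 (q a b ra rq : ℂ) (hra : ra ^ 2 = a) (hrq : rq ^ 2 = q)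
    (hq : q ≠ 0) (hb : b ≠ 0)
    (h1 : ∀ n, qp q (a * q / b) n ≠ 0) (h2 : ∀ n, qp q q n ≠ 0)
    (h3 : ∀ n, qp q (ra * rq⁻¹) n ≠ 0) (h4 : ∀ n, qp q (-(ra * rq⁻¹)) n ≠ 0) :
    ∀ n : ℕ,
      (qp q a n * qp q b n / (qp q (a * q / b) n * qp q q n)) * (q / b) ^ n
        - (if n = 0 then 0 else
            (qp q a (n - 1) * qp q b (n - 1)
              / (qp q (a * q / b) (n - 1) * qp q q (n - 1))) * (q / b) ^ (n - 1))
      = (qp q (ra * rq) n * qp q (-(ra * rq)) n * qp q (a * q⁻¹) n * qp q (b * q⁻¹) n)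
          / (qp q (ra * rq⁻¹) n * qp q (-(ra * rq⁻¹)) n * qp q (a * q / b) n * qp q q n)
          * (q / b) ^ n := by
  have hrq0 : rq ≠ 0 := by
    intro h; apply hq; rw [← hrq, h]; ring
  have hsq1 : (ra * rq) ^ 2 = a * q := by rw [mul_pow, hra, hrq]
  have hsq2 : (ra * rq⁻¹) ^ 2 = a * q⁻¹ := by rw [mul_pow, hra, inv_pow, hrq]
  intro n
  cases n with
  | zero => simp [qp]
  | succ m =>
    simp only [Nat.succ_ne_zero, if_false, Nat.add_sub_cancel]
    have hA1 := qp_shift q a hq m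
    have hB1 := qp_shift q b hq m
    have hfac : (1 - a * q⁻¹) ≠ 0 := by
      have h5 := mul_ne_zero (h3 1) (h4 1)
      rw [qp_mul_neg, hsq2] at h5
      simpa using h5
    have h1s := h1 (m + 1); rw [qp_succ] at h1s
    have h2s := h2 (m + 1); rw [qp_succ] at h2s
    have hu : (1 - a * q / b * q ^ m) ≠ 0 := fun h => h1s (by rw [h, mul_zero])
    have hv : (1 - q * q ^ m) ≠ 0 := fun h => h2s (by rw [h, mul_zero])
    rw [qp_succ q a, qp_succ q b, qp_succ q (a * q / b), qp_succ q q, hA1, hB1,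
      pow_succ (q / b) m]
    set G := qp q (ra * rq) (m + 1) * qp q (-(ra * rq)) (m + 1) with hGdef
    set P := qp q (ra * rq⁻¹) (m + 1) * qp q (-(ra * rq⁻¹)) (m + 1) with hPdef
    have hBp : G = ∏ k ∈ Finset.range (m + 1), (1 - a * q * (q ^ k) ^ 2) := by
      rw [hGdef, qp_mul_neg, hsq1]
    have hCp : P = ∏ k ∈ Finset.range (m + 1), (1 - a * q⁻¹ * (q ^ k) ^ 2) := by
      rw [hPdef, qp_mul_neg, hsq2]
    have hP2 : P ≠ 0 := by rw [hPdef]; exact mul_ne_zero (h3 (m + 1)) (h4 (m + 1))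
    have hG : (1 - a * q⁻¹) * G = (1 - a * q⁻¹ * (q ^ (m + 1)) ^ 2) * P := by
      rw [hBp, hCp]; exact tele q a hq (m + 1)
    have hkey : ((1 - a * q ^ m) * (1 - b * q ^ m) * (q / b)
          - (1 - a * q / b * q ^ m) * (1 - q * q ^ m)) * P
        = G * ((1 - a * q⁻¹) * (1 - b * q⁻¹) * (q / b)) := by
      have h6 : G * ((1 - a * q⁻¹) * (1 - b * q⁻¹) * (q / b))
          = ((1 - a * q⁻¹) * G) * ((1 - b * q⁻¹) * (q / b)) := by ring
      rw [h6, hG]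
      field_simp
      ring
    exact frac_reduce _ _ _ _ _ _ _ _ _ _ _ _ _ _ (h1 m) (h2 m) hu hv hP2 hkey
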